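/- If T and T' are distinct binary trees with n leaves, then the subgroup Λ_{T,T'} of ℤ×ℤ generated by { (ld_T(i)−ld_{T'}(i), rd_T(i)−rd_{T'}(i)) : 1 ≤ i ≤ n } has finite index in ℤ×ℤ (equivalently, it contains ℤ(k,0)+ℤ(0,ℓ) for some nonzero integers k, ℓ). In particular, no rank-one subgroup of ℤ×ℤ is of the form Λ_{T,T'} for distinct trees T ≠ T'. -/

import Mathlib

/-- Binary trees: every internal vertex has exactly a left and a right child. -/
inductive BTree : Type where
  | leaf : BTree
  | node : BTree → BTree → BTree

namespace BTree

/-- Number of leaves. -/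
def numLeaves : BTree → ℕ
  | leaf => 1
  | node l r => l.numLeaves + r.numLeaves

/-- Addresses of the leaves in left-to-right order, as words over `{0,1}`;
`false` records a left step (0) and `true` a right step (1). -/
def addrs : BTree → List (List Bool)
  | leaf => [[]]
  | node l r => (l.addrs.map (fun w => false :: w)) ++ (r.addrs.map (fun w => true :: w))

/-- Address of the `i`-th leaf (0-indexed, left to right). -/
def addr (T : BTree) (i : ℕ) : List Bool := T.addrs.getD i []

/-- Left depth of the `i`-th leaf: number of left steps (0's) in its address. -/
def ld (T : BTree) (i : ℕ) : ℕ := (T.addr i).count false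

/-- Right depth of the `i`-th leaf: number of right steps (1's) in its address. -/
def rd (T : BTree) (i : ℕ) : ℕ := (T.addr i).count true

/-- Total depth of the `i`-th leaf. -/
def depth (T : BTree) (i : ℕ) : ℕ := (T.addr i).length

end BTree

namespace BTree

theorem one_le_numLeaves (T : BTree) : 1 ≤ T.numLeaves := by
  induction T with
  | leaf => exact le_refl _
  | node l r ihl ihr => simp only [numLeaves]; omega

theorem addrs_length (T : BTree) : T.addrs.length = T.numLeaves := by
  induction T with
  | leaf => rfl
  | node l r ihl ihr => simp [addrs, numLeaves, ihl, ihr]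

theorem addr_eq_getElem (T : BTree) (i : ℕ) (h : i < T.numLeaves) :
    T.addr i = T.addrs[i]'(by rw [addrs_length]; exact h) := by
  unfold addr
  rw [List.getD_eq_getElem?_getD, List.getElem?_eq_getElem, Option.getD_some]

theorem addr_node_left (L R : BTree) (i : ℕ) (h : i < L.numLeaves) :
    (node L R).addr i = false :: L.addr i := by
  have h2 : i < (node L R).numLeaves := by
    have := one_le_numLeaves R
    simp only [numLeaves]; omega
  rw [addr_eq_getElem _ i h2, addr_eq_getElem L i h]
  show ((L.addrs.map (fun w => false :: w)) ++ (R.addrs.map (fun w => true :: w)))[i]'(by rw [List.length_append, List.length_map, List.length_map, addrs_length, addrs_length]; exact h2) = _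
  rw [List.getElem_append_left (by rw [List.length_map, addrs_length]; exact h)]
  rw [List.getElem_map]

theorem addr_node_right (L R : BTree) (i : ℕ) (h1 : L.numLeaves ≤ i)
    (h2 : i < (node L R).numLeaves) :
    (node L R).addr i = true :: R.addr (i - L.numLeaves) := by
  have h3 : i - L.numLeaves < R.numLeaves := by
    simp only [numLeaves] at h2; omega
  rw [addr_eq_getElem _ i h2, addr_eq_getElem R _ h3]
  show ((L.addrs.map (fun w => false :: w)) ++ (R.addrs.map (fun w => true :: w)))[i]'(by rw [List.length_append, List.length_map, List.length_map, addrs_length, addrs_length]; exact h2) = _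
  rw [List.getElem_append_right (by rw [List.length_map, addrs_length]; exact h1)]
  simp [addrs_length]

theorem addr_zero (T : BTree) : ∃ d, T.addr 0 = List.replicate d false := by
  induction T with
  | leaf => exact ⟨0, rfl⟩
  | node L R ihl ihr =>
    obtain ⟨d, hd⟩ := ihl
    exact ⟨d + 1, by rw [addr_node_left L R 0 (one_le_numLeaves L), hd, List.replicate_succ]⟩

theorem addr_last (T : BTree) : ∃ d, T.addr (T.numLeaves - 1) = List.replicate d true := by
  induction T with
  | leaf => exact ⟨0, rfl⟩
  | node L R ihl ihr =>
    obtain ⟨d, hd⟩ := ihr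
    have h1 := one_le_numLeaves L
    have h2 := one_le_numLeaves R
    refine ⟨d + 1, ?_⟩
    have hn : (node L R).numLeaves = L.numLeaves + R.numLeaves := rfl
    rw [addr_node_right L R _ (by omega) (by omega)]
    have : (node L R).numLeaves - 1 - L.numLeaves = R.numLeaves - 1 := by omega
    rw [this, hd, List.replicate_succ]

theorem eq_zero_of_rd_eq_zero (T : BTree) (i : ℕ) (h : i < T.numLeaves) (h0 : T.rd i = 0) :
    i = 0 := by
  induction T generalizing i with
  | leaf => simpa [numLeaves] using h
  | node L R ihl ihr =>
    rcases lt_or_ge i L.numLeaves with hi | hi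
    · exact ihl i hi (by rwa [rd, addr_node_left L R i hi, List.count_cons_of_ne (by simp)] at h0)
    · exfalso
      rw [rd, addr_node_right L R i hi h, List.count_cons_self] at h0
      omega

theorem rd_zero (T : BTree) : T.rd 0 = 0 := by
  obtain ⟨d, hd⟩ := addr_zero T
  simp [rd, hd, List.count_replicate]

theorem rd_node_left (L R : BTree) (i : ℕ) (h : i < L.numLeaves) :
    (node L R).rd i = L.rd i := by
  rw [rd, addr_node_left L R i h, List.count_cons_of_ne (by simp)]; rfl

theorem rd_node_right (L R : BTree) (i : ℕ) (h1 : L.numLeaves ≤ i)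
    (h2 : i < (node L R).numLeaves) :
    (node L R).rd i = R.rd (i - L.numLeaves) + 1 := by
  rw [rd, addr_node_right L R i h1 h2, List.count_cons_self]; rfl

theorem not_lt_split (L R L' R' : BTree)
    (hn : (node L R).numLeaves = (node L' R').numLeaves)
    (h : ∀ i < (node L R).numLeaves, (node L R).rd i = (node L' R').rd i)
    (hlt : L.numLeaves < L'.numLeaves) : False := by
  have hR := one_le_numLeaves R
  have hR' := one_le_numLeaves R'
  have hnn : (node L R).numLeaves = L.numLeaves + R.numLeaves := rfl
  have hnn' : (node L' R').numLeaves = L'.numLeaves + R'.numLeaves := rfl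
  have hm' : L'.numLeaves < (node L R).numLeaves := by omega
  have e1 : (node L R).rd L'.numLeaves = R.rd (L'.numLeaves - L.numLeaves) + 1 :=
    rd_node_right L R _ (by omega) hm'
  have e2 : (node L' R').rd L'.numLeaves = R'.rd 0 + 1 := by
    have := rd_node_right L' R' L'.numLeaves (le_refl _) (by omega)
    simpa using this
  have := h L'.numLeaves hm'
  rw [e1, e2, rd_zero] at this
  have h0 : L'.numLeaves - L.numLeaves = 0 :=
    eq_zero_of_rd_eq_zero R _ (by omega) (by omega)
  omega

theorem eq_of_rd_eq (T T' : BTree) (hn : T.numLeaves = T'.numLeaves)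
    (h : ∀ i < T.numLeaves, T.rd i = T'.rd i) : T = T' := by
  induction T generalizing T' with
  | leaf =>
    cases T' with
    | leaf => rfl
    | node L' R' =>
      have := one_le_numLeaves L'; have := one_le_numLeaves R'
      simp only [numLeaves] at hn; omega
  | node L R ihl ihr =>
    cases T' with
    | leaf =>
      have := one_le_numLeaves L; have := one_le_numLeaves R
      simp only [numLeaves] at hn; omega
    | node L' R' =>
      have hmm : L.numLeaves = L'.numLeaves := by
        rcases lt_trichotomy L.numLeaves L'.numLeaves with hlt | heq | hgt
        · exact absurd hlt (fun hlt => not_lt_split L R L' R' hn h hlt)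
        · exact heq
        · exact absurd hgt (fun hgt =>
            not_lt_split L' R' L R hn.symm (fun i hi => (h i (hn ▸ hi)).symm) hgt)
      have hnn : (node L R).numLeaves = L.numLeaves + R.numLeaves := rfl
      have hnn' : (node L' R').numLeaves = L'.numLeaves + R'.numLeaves := rfl
      have hLL : L = L' := by
        apply ihl L' hmm
        intro i hi
        have h1 := rd_node_left L R i hi
        have h2 := rd_node_left L' R' i (hmm ▸ hi)
        have h3 := h i (by omega)
        rw [h1, h2] at h3; exact h3
      have hRR : R = R' := by
        apply ihr R' (by omega)
        intro j hj
        have h1 := rd_node_right L R (L.numLeaves + j) (by omega) (by omega)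
        have h2 := rd_node_right L' R' (L.numLeaves + j) (by omega) (by omega)
        have h3 := h (L.numLeaves + j) (by omega)
        rw [h1, h2] at h3
        simp only [Nat.add_sub_cancel_left] at h3
        rw [← hmm] at h3
        simp only [Nat.add_sub_cancel_left] at h3
        omega
      rw [hLL, hRR]


theorem consec (T : BTree) (i : ℕ) (h : i + 1 < T.numLeaves) :
    ∃ u s t, T.addr i = u ++ false :: List.replicate s true ∧
             T.addr (i + 1) = u ++ true :: List.replicate t false := by
  induction T generalizing i with
  | leaf => simp [numLeaves] at h
  | node L R ihl ihr =>
    have hnn : (node L R).numLeaves = L.numLeaves + R.numLeaves := rfl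
    have hL := one_le_numLeaves L
    have hR := one_le_numLeaves R
    rcases lt_trichotomy (i + 1) L.numLeaves with hlt | heq | hgt
    · obtain ⟨u, s, t, h1, h2⟩ := ihl i hlt
      exact ⟨false :: u, s, t,
        by rw [addr_node_left L R i (by omega), h1]; rfl,
        by rw [addr_node_left L R (i+1) hlt, h2]; rfl⟩
    · obtain ⟨s, hs⟩ := addr_last L
      obtain ⟨t, ht⟩ := addr_zero R
      refine ⟨[], s, t, ?_, ?_⟩
      · rw [addr_node_left L R i (by omega)]
        have : i = L.numLeaves - 1 := by omega
        rw [this, hs]; rfl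
      · rw [addr_node_right L R (i+1) (by omega) (by omega)]
        have : i + 1 - L.numLeaves = 0 := by omega
        rw [this, ht]; rfl
    · obtain ⟨u, s, t, h1, h2⟩ := ihr (i - L.numLeaves) (by omega)
      refine ⟨true :: u, s, t, ?_, ?_⟩
      · rw [addr_node_right L R i (by omega) (by omega), h1]; rfl
      · rw [addr_node_right L R (i+1) (by omega) (by omega)]
        have : i + 1 - L.numLeaves = (i - L.numLeaves) + 1 := by omega
        rw [this, h2]; rfl

theorem rep_true_aux : ∀ (s s' : ℕ) (v v' : List Bool),
    List.replicate s true ++ false :: v = List.replicate s' true ++ false :: v' →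
    s = s' ∧ v = v' := by
  intro s
  induction s with
  | zero =>
    intro s' v v' h
    cases s' with
    | zero => simpa using h
    | succ k => rw [List.replicate_succ] at h; simp at h
  | succ k ih =>
    intro s' v v' h
    cases s' with
    | zero => rw [List.replicate_succ] at h; simp at h
    | succ k' =>
      rw [List.replicate_succ, List.replicate_succ] at h
      simp only [List.cons_append, List.cons.injEq, true_and] at h
      obtain ⟨h1, h2⟩ := ih k' v v' h
      exact ⟨by omega, h2⟩

theorem split_unique {u u' : List Bool} {s s' : ℕ}
    (h : u ++ false :: List.replicate s true = u' ++ false :: List.replicate s' true) :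
    u = u' ∧ s = s' := by
  have h2 := congrArg List.reverse h
  simp only [List.reverse_append, List.reverse_cons, List.reverse_replicate] at h2
  have h3 : List.replicate s true ++ false :: u.reverse
      = List.replicate s' true ++ false :: u'.reverse := by
    simpa [List.append_assoc] using h2
  obtain ⟨hs, hu⟩ := rep_true_aux s s' _ _ h3
  exact ⟨List.reverse_injective hu, hs⟩

theorem exists_horizontal (T T' : BTree) (n : ℕ) (hT : T.numLeaves = n)
    (hT' : T'.numLeaves = n) (hne : T ≠ T') :
    ∃ i < n, T.rd i = T'.rd i ∧ T.ld i ≠ T'.ld i := by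
  classical
  have hex : ∃ i, i < n ∧ T.addr i ≠ T'.addr i := by
    by_contra hc
    push_neg at hc
    refine hne (eq_of_rd_eq T T' (hT.trans hT'.symm) ?_)
    intro i hi
    rw [rd, rd, hc i (hT ▸ hi)]
  set i := Nat.find hex with hidef
  obtain ⟨hin, hina⟩ : i < n ∧ T.addr i ≠ T'.addr i := Nat.find_spec hex
  cases hi : i with
  | zero =>
    obtain ⟨d, hd⟩ := addr_zero T
    obtain ⟨d', hd'⟩ := addr_zero T'
    rw [hi] at hin hina
    refine ⟨0, hin, ?_, ?_⟩
    · rw [rd, rd, hd, hd']; simp [List.count_replicate]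
    · have hdd : d ≠ d' := by
        intro hdd; exact hina (by rw [hd, hd', hdd])
      rw [ld, ld, hd, hd']
      simp [List.count_replicate]
      omega
  | succ j =>
    have hj : T.addr j = T'.addr j := by
      have hmin := Nat.find_min hex (m := j) (by omega)
      push_neg at hmin
      exact hmin (by omega)
    obtain ⟨u, s, t, a1, a2⟩ := consec T j (by omega)
    obtain ⟨u', s', t', b1, b2⟩ := consec T' j (by omega)
    have huu : u = u' ∧ s = s' := split_unique (by rw [← a1, ← b1, hj])
    rw [hi] at hin hina
    have ht : t ≠ t' := by
      intro htt
      exact hina (by rw [a2, b2, huu.1, htt])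
    refine ⟨j + 1, hin, ?_, ?_⟩
    · rw [rd, rd, a2, b2, huu.1]
      simp [List.count_append, List.count_replicate]
    · rw [ld, ld, a2, b2, huu.1]
      simp [List.count_append, List.count_replicate]
      omega


end BTree

/-- For distinct binary trees `T ≠ T'`, the subgroup `Λ_{T,T'} ≤ ℤ×ℤ` generated by
the depth-difference pairs has finite index; equivalently, it contains `(k,0)` and
`(0,ℓ)` for some nonzero integers `k, ℓ`. In particular no rank-one subgroup of
`ℤ×ℤ` is of this form. -/
theorem stmt15 (T T' : BTree) (n : ℕ)
    (hT : T.numLeaves = n) (hT' : T'.numLeaves = n) (hne : T ≠ T') :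
    (AddSubgroup.closure
        {p : ℤ × ℤ | ∃ i < n,
          p = ((T.ld i : ℤ) - (T'.ld i : ℤ), (T.rd i : ℤ) - (T'.rd i : ℤ))}).FiniteIndex ∧
    ∃ k ℓ : ℤ, k ≠ 0 ∧ ℓ ≠ 0 ∧
      (k, (0 : ℤ)) ∈ AddSubgroup.closure
        {p : ℤ × ℤ | ∃ i < n,
          p = ((T.ld i : ℤ) - (T'.ld i : ℤ), (T.rd i : ℤ) - (T'.rd i : ℤ))} ∧
      ((0 : ℤ), ℓ) ∈ AddSubgroup.closure
        {p : ℤ × ℤ | ∃ i < n,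
          p = ((T.ld i : ℤ) - (T'.ld i : ℤ), (T.rd i : ℤ) - (T'.rd i : ℤ))} := by
  set S : Set (ℤ × ℤ) :=
    {p : ℤ × ℤ | ∃ i < n,
      p = ((T.ld i : ℤ) - (T'.ld i : ℤ), (T.rd i : ℤ) - (T'.rd i : ℤ))} with hS
  obtain ⟨i0, hi0n, hrd0, hld0⟩ := BTree.exists_horizontal T T' n hT hT' hne
  have hjex : ∃ j < n, T.rd j ≠ T'.rd j := by
    by_contra hc
    push_neg at hc
    exact hne (BTree.eq_of_rd_eq T T' (hT.trans hT'.symm) (fun i hi => hc i (hT ▸ hi)))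
  obtain ⟨j, hjn, hrdj⟩ := hjex
  set k : ℤ := (T.ld i0 : ℤ) - (T'.ld i0 : ℤ) with hk
  set a : ℤ := (T.ld j : ℤ) - (T'.ld j : ℤ) with ha
  set b : ℤ := (T.rd j : ℤ) - (T'.rd j : ℤ) with hb
  have hk0 : k ≠ 0 := sub_ne_zero.mpr (fun h => hld0 (by exact_mod_cast h))
  have hb0 : b ≠ 0 := sub_ne_zero.mpr (fun h => hrdj (by exact_mod_cast h))
  have hg1 : (k, (0 : ℤ)) ∈ AddSubgroup.closure S := by
    apply AddSubgroup.subset_closure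
    exact ⟨i0, hi0n, by rw [hrd0, sub_self]⟩
  have hg2 : (a, b) ∈ AddSubgroup.closure S := by
    apply AddSubgroup.subset_closure
    exact ⟨j, hjn, rfl⟩
  have hg3 : ((0 : ℤ), k * b) ∈ AddSubgroup.closure S := by
    have hm := AddSubgroup.sub_mem _ (AddSubgroup.zsmul_mem _ hg2 k)
      (AddSubgroup.zsmul_mem _ hg1 a)
    have : k • ((a, b) : ℤ × ℤ) - a • ((k, (0:ℤ)) : ℤ × ℤ) = ((0 : ℤ), k * b) := by
      simp [Prod.ext_iff, smul_eq_mul, mul_comm]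
    rwa [this] at hm
  have hle : (AddSubgroup.zmultiples k).prod (AddSubgroup.zmultiples (k * b))
      ≤ AddSubgroup.closure S := by
    rintro ⟨x, y⟩ ⟨⟨c, hc⟩, ⟨d, hd⟩⟩
    have : ((x, y) : ℤ × ℤ) = c • ((k, (0:ℤ)) : ℤ × ℤ) + d • (((0:ℤ), k * b) : ℤ × ℤ) := by
      simp only [Prod.smul_mk, Prod.mk_add_mk, smul_zero, smul_eq_mul] at *
      rw [Prod.ext_iff]
      constructor <;> simp [← hc, ← hd]
    rw [this]
    exact AddSubgroup.add_mem _ (AddSubgroup.zsmul_mem _ hg1 c) (AddSubgroup.zsmul_mem _ hg3 d)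
  have hfin : ((AddSubgroup.zmultiples k).prod (AddSubgroup.zmultiples (k * b))).FiniteIndex := by
    constructor
    rw [AddSubgroup.index_prod, Int.index_zmultiples, Int.index_zmultiples]
    simp only [ne_eq, Nat.mul_eq_zero, Int.natAbs_eq_zero, not_or]
    exact ⟨hk0, mul_ne_zero hk0 hb0⟩
  refine ⟨?_, k, k * b, hk0, mul_ne_zero hk0 hb0, hg1, hg3⟩
  exact @AddSubgroup.finiteIndex_of_le _ _ _ _ hfin hle
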